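/- arXiv:1801.08303 — 7 statements merged into one kernel-verified Lean document; each statement's English description precedes it below -/
import Mathlib

section
/- Let E be a real inner product space of dimension n ≥ 4 and let R be an algebraic curvature tensor on E with nonnegative isotropic curvature. Then for every pair of orthonormal vectors e₁, e₂ in E one has Ric(e₁,e₁) + Ric(e₂,e₂) ≥ 2 R(e₁,e₂,e₁,e₂), where Ric denotes the Ricci curvature of R. -/
open scoped RealInnerProductSpace

/-- Trace of a bilinear form is independent of the orthonormal basis. -/
lemma sum_ob_indep {E : Type*} [NormedAddCommGroup E] [InnerProductSpace ℝ E]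
    {n : ℕ} (f : E →ₗ[ℝ] E →ₗ[ℝ] ℝ) (b c : OrthonormalBasis (Fin n) ℝ E) :
    ∑ i, f (b i) (b i) = ∑ i, f (c i) (c i) := by
  have hcc : ∀ p q : Fin n, ⟪c p, c q⟫ = if p = q then (1:ℝ) else 0 :=
    orthonormal_iff_ite.mp c.orthonormal
  calc ∑ i, f (b i) (b i)
      = ∑ i, f (∑ j, ⟪c j, b i⟫ • c j) (∑ k, ⟪c k, b i⟫ • c k) := by
        simp_rw [c.sum_repr']
    _ = ∑ i, ∑ j, ∑ k, ⟪c j, b i⟫ * ⟪c k, b i⟫ * f (c j) (c k) := by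
        refine Finset.sum_congr rfl fun i _ => ?_
        rw [map_sum, Finset.sum_comm]
        refine Finset.sum_congr rfl fun k _ => ?_
        rw [map_smul, smul_eq_mul, map_sum, LinearMap.sum_apply, Finset.mul_sum]
        refine Finset.sum_congr rfl fun j _ => ?_
        rw [map_smul, LinearMap.smul_apply, smul_eq_mul]; ring
    _ = ∑ j, ∑ k, (∑ i, ⟪c j, b i⟫ * ⟪b i, c k⟫) * f (c j) (c k) := by
        rw [Finset.sum_comm]
        congr 1; ext j
        rw [Finset.sum_comm]
        congr 1; ext k
        rw [Finset.sum_mul]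
        congr 1; ext i
        rw [real_inner_comm (b i) (c k)]
    _ = ∑ j, ∑ k, (if j = k then (1:ℝ) else 0) * f (c j) (c k) := by
        simp_rw [OrthonormalBasis.sum_inner_mul_inner, hcc]
    _ = ∑ j, f (c j) (c j) := by
        simp [Finset.sum_ite_eq', mul_comm]

lemma sum_nonneg_of_pairwise {ι : Type*} [DecidableEq ι] (s : Finset ι) (a : ι → ℝ)
    (hcard : 2 ≤ s.card) (hpair : ∀ i ∈ s, ∀ j ∈ s, i ≠ j → 0 ≤ a i + a j) :
    0 ≤ ∑ i ∈ s, a i := by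
  set A := ∑ i ∈ s, a i with hA
  have h1 : 0 ≤ ∑ i ∈ s, ∑ j ∈ s.erase i, (a i + a j) := by
    apply Finset.sum_nonneg; intro i hi
    apply Finset.sum_nonneg; intro j hj
    exact hpair i hi j (Finset.mem_of_mem_erase hj) (fun h => (Finset.ne_of_mem_erase hj) h.symm)
  have h2 : ∑ i ∈ s, ∑ j ∈ s.erase i, (a i + a j)
      = ∑ i ∈ s, (((s.card - 1 : ℕ) : ℝ) * a i + (A - a i)) := by
    apply Finset.sum_congr rfl; intro i hi
    rw [Finset.sum_add_distrib, Finset.sum_const, Finset.sum_erase_eq_sub hi,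
      Finset.card_erase_of_mem hi, nsmul_eq_mul, hA]
  have h3 : ∑ i ∈ s, (((s.card - 1 : ℕ) : ℝ) * a i + (A - a i))
      = ((s.card - 1 : ℕ) : ℝ) * A + ((s.card : ℕ) : ℝ) * A - A := by
    rw [Finset.sum_add_distrib, ← Finset.mul_sum, Finset.sum_sub_distrib,
      Finset.sum_const, nsmul_eq_mul, ← hA]
    ring
  rw [h2, h3] at h1
  have hc : (2:ℝ) ≤ ((s.card : ℕ) : ℝ) := by exact_mod_cast hcard
  have hc1 : (1:ℝ) ≤ ((s.card - 1 : ℕ) : ℝ) := by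
    have : 1 ≤ s.card - 1 := by omega
    exact_mod_cast this
  nlinarith


/-- If an algebraic curvature tensor `R` on a real inner product space of
dimension `n ≥ 4` has nonnegative isotropic curvature, then for every orthonormal pair
`(e₁, e₂)` one has `Ric(e₁,e₁) + Ric(e₂,e₂) ≥ 2 R(e₁,e₂,e₁,e₂)`, where
`Ric(x,y) = ∑ i, R(x, bᵢ, y, bᵢ)` for an orthonormal basis `(bᵢ)`. -/
theorem stmt1 {E : Type*} [NormedAddCommGroup E] [InnerProductSpace ℝ E]
    [FiniteDimensional ℝ E] {n : ℕ} (hn : Module.finrank ℝ E = n) (hdim : 4 ≤ n)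
    (R : E →ₗ[ℝ] E →ₗ[ℝ] E →ₗ[ℝ] E →ₗ[ℝ] ℝ)
    (hanti₁ : ∀ x y z w, R x y z w = - R y x z w)
    (hanti₂ : ∀ x y z w, R x y z w = - R x y w z)
    (hpair : ∀ x y z w, R x y z w = R z w x y)
    (hbianchi : ∀ x y z w, R x y z w + R y z x w + R z x y w = 0)
    (hNNIC : ∀ e : Fin 4 → E, Orthonormal ℝ e →
      R (e 0) (e 2) (e 0) (e 2) + R (e 0) (e 3) (e 0) (e 3) +
        R (e 1) (e 2) (e 1) (e 2) + R (e 1) (e 3) (e 1) (e 3) -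
        2 * R (e 0) (e 1) (e 2) (e 3) ≥ 0)
    (b : OrthonormalBasis (Fin n) ℝ E)
    (Ric : E → E → ℝ)
    (hRic : ∀ x y, Ric x y = ∑ i, R x (b i) y (b i)) :
    ∀ e₁ e₂ : E, Orthonormal ℝ ![e₁, e₂] →
      Ric e₁ e₁ + Ric e₂ e₂ ≥ 2 * R e₁ e₂ e₁ e₂ := by
  
  intro e₁ e₂ he
  haveI : NeZero n := ⟨by omega⟩
  have h01 : (0 : Fin n) ≠ 1 := by
    refine Fin.ne_of_val_ne ?_
    simp [Fin.val_one', Nat.mod_eq_of_lt (show 1 < n by omega)]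
  -- facts about e₁, e₂
  have hn1 : ‖e₁‖ = 1 := by simpa using he.1 0
  have hn2 : ‖e₂‖ = 1 := by simpa using he.1 1
  have h12 : ⟪e₁, e₂⟫ = 0 := by
    simpa using he.2 (i := 0) (j := 1) (by decide)
  -- extend to an orthonormal basis c with c 0 = e₁, c 1 = e₂
  set v : Fin n → E := fun i => if i = 0 then e₁ else e₂ with hv_def
  have hv : Orthonormal ℝ (Set.restrict ({0, 1} : Set (Fin n)) v) := by
    constructor
    · rintro ⟨x, hx⟩
      rcases (by simpa using hx : x = 0 ∨ x = 1) with h | h <;> subst h <;>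
        simp [v, Set.restrict, hn1, hn2, h01.symm]
    · rintro ⟨x, hx⟩ ⟨y, hy⟩ hxy
      have hxy' : x ≠ y := fun h => hxy (Subtype.ext h)
      rcases (by simpa using hx : x = 0 ∨ x = 1) with h | h <;>
        rcases (by simpa using hy : y = 0 ∨ y = 1) with h' | h' <;>
          subst h <;> subst h'
      · exact absurd rfl hxy'
      · show ⟪v 0, v 1⟫ = 0
        simp only [hv_def]
        rw [if_pos trivial, if_neg h01.symm]
        exact h12
      · show ⟪v 1, v 0⟫ = 0
        simp only [hv_def]
        rw [if_pos trivial, if_neg h01.symm]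
        rw [real_inner_comm]
        exact h12
      · exact absurd rfl hxy'
  obtain ⟨c, hc⟩ := hv.exists_orthonormalBasis_extension_of_card_eq
    (by rw [hn, Fintype.card_fin])
  have hc0 : c 0 = e₁ := by rw [hc 0 (by simp)]; simp [v]
  have hc1 : c 1 = e₂ := by rw [hc 1 (by simp)]; simp [v, h01.symm]
  have hcc : ∀ p q : Fin n, ⟪c p, c q⟫ = if p = q then (1:ℝ) else 0 :=
    orthonormal_iff_ite.mp c.orthonormal
  -- Ric with respect to c
  have hRic' : ∀ x y : E, Ric x y = ∑ i, R x (c i) y (c i) := by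
    intro x y
    let f : E →ₗ[ℝ] E →ₗ[ℝ] ℝ := LinearMap.mk₂ ℝ (fun u w => R x u y w)
      (fun u u' w => by simp) (fun t u w => by simp)
      (fun u w w' => by simp) (fun t u w => by simp)
    calc Ric x y = ∑ i, f (b i) (b i) := by rw [hRic]; simp [f]
      _ = ∑ i, f (c i) (c i) := sum_ob_indep f b c
      _ = ∑ i, R x (c i) y (c i) := by simp [f]
  have hzero : ∀ x z w : E, R x x z w = 0 := fun x z w => by
    have := hanti₁ x x z w; linarith
  set a : Fin n → ℝ := fun i => R e₁ (c i) e₁ (c i) + R e₂ (c i) e₂ (c i) with ha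
  set t : Finset (Fin n) := {0, 1} with ht
  -- pairwise nonnegativity on the complement
  have hpairnn : ∀ i ∈ tᶜ, ∀ j ∈ tᶜ, i ≠ j → 0 ≤ a i + a j := by
    intro i hi j hj hij
    have hi' : i ≠ 0 ∧ i ≠ 1 := by simpa [ht] using hi
    have hj' : j ≠ 0 ∧ j ≠ 1 := by simpa [ht] using hj
    have hf : Orthonormal ℝ ![e₁, e₂, c i, c j] := by
      rw [orthonormal_iff_ite]
      intro p q
      fin_cases p <;> fin_cases q <;>
        simp [← hc0, ← hc1, hcc, h01, h01.symm, hi'.1, hi'.2, hj'.1, hj'.2, hij,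
          (hi'.1).symm, (hi'.2).symm, (hj'.1).symm, (hj'.2).symm, hij.symm]
    have hg : Orthonormal ℝ ![e₁, -e₂, c i, c j] := by
      rw [orthonormal_iff_ite]
      intro p q
      fin_cases p <;> fin_cases q <;>
        simp [← hc0, ← hc1, hcc, inner_neg_left, inner_neg_right, h01, h01.symm,
          hi'.1, hi'.2, hj'.1, hj'.2, hij,
          (hi'.1).symm, (hi'.2).symm, (hj'.1).symm, (hj'.2).symm, hij.symm]
    have H1 := hNNIC ![e₁, e₂, c i, c j] hf
    have H2 := hNNIC ![e₁, -e₂, c i, c j] hg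
    simp only [Matrix.cons_val_zero, Matrix.cons_val_one, Matrix.head_cons,
      Matrix.cons_val_two, Matrix.tail_cons, Matrix.cons_val_three, Matrix.head_fin_const,
      map_neg, LinearMap.neg_apply, neg_neg] at H1 H2
    simp only [ha]
    have hneg : ∀ x : E, R (-e₂) x e₂ x = - R e₂ x e₂ x := fun x => by
      rw [hpair]; simp only [map_neg, LinearMap.neg_apply]
    linarith [hneg (c i), hneg (c j)]
  have hcardc : 2 ≤ (tᶜ).card := by
    rw [Finset.card_compl, Fintype.card_fin, ht, Finset.card_pair h01]
    omega
  have key : 0 ≤ ∑ i ∈ tᶜ, a i := sum_nonneg_of_pairwise _ a hcardc hpairnn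
  have hsplit : (∑ i ∈ t, a i) + ∑ i ∈ tᶜ, a i = ∑ i, a i := Finset.sum_add_sum_compl t a
  have hsum_t : ∑ i ∈ t, a i = a 0 + a 1 := by rw [ht, Finset.sum_pair h01]
  have hsymm : R e₂ e₁ e₂ e₁ = R e₁ e₂ e₁ e₂ := by
    have h1 := hanti₁ e₂ e₁ e₂ e₁
    have h2 := hanti₂ e₁ e₂ e₂ e₁
    linarith
  have ha0 : a 0 = R e₁ e₂ e₁ e₂ := by
    simp only [ha, hc0]
    rw [hzero, hsymm]; ring
  have ha1 : a 1 = R e₁ e₂ e₁ e₂ := by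
    simp only [ha, hc1]
    rw [hzero]; ring
  have hRicsum : Ric e₁ e₁ + Ric e₂ e₂ = ∑ i, a i := by
    rw [hRic' e₁ e₁, hRic' e₂ e₂, ← Finset.sum_add_distrib]
  rw [ge_iff_le, hRicsum, ← hsplit, hsum_t, ha0, ha1]
  linarith
end

section
/- Let E be a real inner product space of dimension n ≥ 4 and let R be an algebraic curvature tensor on E with nonnegative isotropic curvature. Then for every orthonormal 4-tuple (e₁,e₂,e₃,e₄) in E one has Ric(e₁,e₁) + Ric(e₂,e₂) + Ric(e₃,e₃) + Ric(e₄,e₄) ≥ 0, where Ric denotes the Ricci curvature of R. -/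
open scoped RealInnerProductSpace

private lemma trace_indep {E : Type*} [NormedAddCommGroup E] [InnerProductSpace ℝ E]
    {n : ℕ} (B : E →ₗ[ℝ] E →ₗ[ℝ] ℝ) (b f : OrthonormalBasis (Fin n) ℝ E) :
    ∑ i, B (f i) (f i) = ∑ i, B (b i) (b i) := by
  have e0 : ∀ x y : E, B x y = ∑ p, ⟪b p, x⟫ * B (b p) y := by
    intro x y
    conv_lhs => rw [← b.sum_repr' x]
    simp only [map_sum, map_smul, LinearMap.sum_apply, LinearMap.smul_apply, smul_eq_mul]
  have e2 : ∀ u x : E, B u x = ∑ q, ⟪b q, x⟫ * B u (b q) := by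
    intro u x
    conv_lhs => rw [← b.sum_repr' x]
    simp only [map_sum, map_smul, smul_eq_mul]
  have key : ∀ x : E, B x x = ∑ p, ∑ q, (⟪b p, x⟫ * ⟪b q, x⟫) * B (b p) (b q) := by
    intro x
    rw [e0 x x]
    refine Finset.sum_congr rfl fun p _ => ?_
    rw [e2 (b p) x, Finset.mul_sum]
    exact Finset.sum_congr rfl fun q _ => by ring
  calc ∑ i, B (f i) (f i)
      = ∑ i, ∑ p, ∑ q, (⟪b p, f i⟫ * ⟪b q, f i⟫) * B (b p) (b q) :=
        Finset.sum_congr rfl fun i _ => key (f i)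
    _ = ∑ p, ∑ q, (∑ i, ⟪b p, f i⟫ * ⟪b q, f i⟫) * B (b p) (b q) := by
        rw [Finset.sum_comm]
        refine Finset.sum_congr rfl fun p _ => ?_
        rw [Finset.sum_comm]
        exact Finset.sum_congr rfl fun q _ => by rw [Finset.sum_mul]
    _ = ∑ p, ∑ q, ⟪b p, b q⟫ * B (b p) (b q) := by
        refine Finset.sum_congr rfl fun p _ => Finset.sum_congr rfl fun q _ => ?_
        congr 1
        have h : ∀ i, ⟪b q, f i⟫ = ⟪f i, b q⟫ := fun i => real_inner_comm _ _
        simp_rw [h]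
        exact f.sum_inner_mul_inner (b p) (b q)
    _ = ∑ p, B (b p) (b p) := by
        refine Finset.sum_congr rfl fun p _ => ?_
        have h := fun q => orthonormal_iff_ite.mp b.orthonormal p q
        simp_rw [h, ite_mul, one_mul, zero_mul]
        rw [Finset.sum_ite_eq]
        simp

private lemma sum_nonneg_of_pair {ι : Type*} [DecidableEq ι] (s : Finset ι) (T : ι → ℝ) (h2 : 2 ≤ s.card)
    (hp : ∀ i ∈ s, ∀ j ∈ s, i ≠ j → 0 ≤ T i + T j) : 0 ≤ ∑ i ∈ s, T i := by
  obtain ⟨i₀, hi₀, hmin⟩ := s.exists_min_image T (Finset.card_pos.mp (by omega))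
  rcases le_or_gt 0 (T i₀) with h | h
  · exact Finset.sum_nonneg fun j hj => le_trans h (hmin j hj)
  · rw [← Finset.add_sum_erase s T hi₀]
    have hcard : 1 ≤ (s.erase i₀).card := by rw [Finset.card_erase_of_mem hi₀]; omega
    have hb : ∀ j ∈ s.erase i₀, -T i₀ ≤ T j := fun j hj => by
      have := hp i₀ hi₀ j (Finset.mem_of_mem_erase hj)
        (fun e => (Finset.ne_of_mem_erase hj) e.symm)
      linarith
    have hks := Finset.card_nsmul_le_sum (s.erase i₀) T (-T i₀) hb
    rw [nsmul_eq_mul] at hks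
    have hk1 : (1 : ℝ) ≤ ((s.erase i₀).card : ℝ) := by exact_mod_cast hcard
    nlinarith [hks, hk1, h]

/-- If an algebraic curvature tensor `R` on a real inner product space of
dimension `n ≥ 4` has nonnegative isotropic curvature, then for every orthonormal 4-tuple
`(e₁,e₂,e₃,e₄)` one has `Ric(e₁,e₁) + Ric(e₂,e₂) + Ric(e₃,e₃) + Ric(e₄,e₄) ≥ 0`, where
`Ric(x,y) = ∑ i, R(x, bᵢ, y, bᵢ)` for an orthonormal basis `(bᵢ)`. -/
theorem stmt2 {E : Type*} [NormedAddCommGroup E] [InnerProductSpace ℝ E]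
    [FiniteDimensional ℝ E] {n : ℕ} (hn : Module.finrank ℝ E = n) (hdim : 4 ≤ n)
    (R : E →ₗ[ℝ] E →ₗ[ℝ] E →ₗ[ℝ] E →ₗ[ℝ] ℝ)
    (hanti₁ : ∀ x y z w, R x y z w = - R y x z w)
    (hanti₂ : ∀ x y z w, R x y z w = - R x y w z)
    (hpair : ∀ x y z w, R x y z w = R z w x y)
    (hbianchi : ∀ x y z w, R x y z w + R y z x w + R z x y w = 0)
    (hNNIC : ∀ e : Fin 4 → E, Orthonormal ℝ e →
      R (e 0) (e 2) (e 0) (e 2) + R (e 0) (e 3) (e 0) (e 3) +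
        R (e 1) (e 2) (e 1) (e 2) + R (e 1) (e 3) (e 1) (e 3) -
        2 * R (e 0) (e 1) (e 2) (e 3) ≥ 0)
    (b : OrthonormalBasis (Fin n) ℝ E)
    (Ric : E → E → ℝ)
    (hRic : ∀ x y, Ric x y = ∑ i, R x (b i) y (b i)) :
    ∀ e : Fin 4 → E, Orthonormal ℝ e →
      Ric (e 0) (e 0) + Ric (e 1) (e 1) + Ric (e 2) (e 2) + Ric (e 3) (e 3) ≥ 0 := by
  intro e he
  classical
  -- Step 1: the averaged NNIC inequality
  have hQ : ∀ x : Fin 4 → E, Orthonormal ℝ x →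
      0 ≤ R (x 0) (x 2) (x 0) (x 2) + R (x 0) (x 3) (x 0) (x 3) +
          R (x 1) (x 2) (x 1) (x 2) + R (x 1) (x 3) (x 1) (x 3) := by
    intro x hx
    have h1 := hNNIC x hx
    have hx2 : Orthonormal ℝ (x ∘ Equiv.swap 0 1) := hx.comp _ (Equiv.injective _)
    have h2 := hNNIC (x ∘ Equiv.swap 0 1) hx2
    simp only [Function.comp_apply] at h2
    rw [show (Equiv.swap (0 : Fin 4) 1) 0 = 1 from Equiv.swap_apply_left 0 1,
        show (Equiv.swap (0 : Fin 4) 1) 1 = 0 from Equiv.swap_apply_right 0 1,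
        show (Equiv.swap (0 : Fin 4) 1) 2 = 2 from
          Equiv.swap_apply_of_ne_of_ne (by decide) (by decide),
        show (Equiv.swap (0 : Fin 4) 1) 3 = 3 from
          Equiv.swap_apply_of_ne_of_ne (by decide) (by decide)] at h2
    have ha := hanti₁ (x 1) (x 0) (x 2) (x 3)
    linarith
  -- Step 2: extend e to an orthonormal basis f
  set v : Fin n → E := fun i => if h : (i : ℕ) < 4 then e ⟨i, h⟩ else 0 with hv
  have hvo : Orthonormal ℝ (Set.restrict {i : Fin n | (i : ℕ) < 4} v) := by
    have hre : Set.restrict {i : Fin n | (i : ℕ) < 4} v =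
        e ∘ (fun j : {i : Fin n | (i : ℕ) < 4} => (⟨(j : Fin n), j.2⟩ : Fin 4)) := by
      funext j
      simp only [Set.restrict_apply, Function.comp_apply, hv]
      exact dif_pos (show (((j : Fin n)) : ℕ) < 4 from j.2)
    rw [hre]
    refine he.comp _ ?_
    intro j k hjk
    apply Subtype.ext
    apply Fin.ext
    have h' := congrArg Fin.val hjk
    exact h'
  obtain ⟨f, hfe⟩ := hvo.exists_orthonormalBasis_extension_of_card_eq (by simp [hn])
  set E4 : Fin 4 → Fin n := fun a => ⟨a, lt_of_lt_of_le a.isLt hdim⟩ with hE4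
  have hfE4 : ∀ a : Fin 4, f (E4 a) = e a := by
    intro a
    have h4 : ((E4 a : Fin n) : ℕ) < 4 := a.isLt
    rw [hfe (E4 a) h4]
    simp only [hv]
    rw [dif_pos h4]
  set K : Fin n → Fin n → ℝ := fun p q => R (f p) (f q) (f p) (f q) with hKdef
  have hKapp : ∀ p q, R (f p) (f q) (f p) (f q) = K p q := fun _ _ => rfl
  have hKsymm : ∀ p q, K p q = K q p := by
    intro p q
    have h1 := hanti₁ (f p) (f q) (f p) (f q)
    have h2 := hanti₂ (f q) (f p) (f p) (f q)
    simp only [hKapp] at h1 h2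
    linarith
  have hKdiag : ∀ p, K p p = 0 := fun p => by
    have := hanti₁ (f p) (f p) (f p) (f p); simp only [hKapp] at this; linarith
  have hQ' : ∀ p q r s : Fin n, p ≠ q → p ≠ r → p ≠ s → q ≠ r → q ≠ s → r ≠ s →
      0 ≤ K p r + K p s + K q r + K q s := by
    intro p q r s hpq hpr hps hqr hqs hrs
    have hinj : Function.Injective ![p, q, r, s] := by
      intro i j hij
      fin_cases i <;> fin_cases j <;>
        simp only [Matrix.cons_val_zero, Matrix.cons_val_one, Matrix.head_cons,
          Matrix.cons_val_two, Matrix.cons_val_three, Matrix.tail_cons, Fin.isValue] at hij ⊢ <;>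
        first | rfl | (exact absurd hij (by assumption)) |
          (exact absurd hij.symm (by assumption))
    have ho : Orthonormal ℝ (f ∘ ![p, q, r, s]) := f.orthonormal.comp _ hinj
    have h := hQ _ ho
    simp only [Function.comp_apply, Matrix.cons_val_zero, Matrix.cons_val_one, Matrix.head_cons,
      Matrix.cons_val_two, Matrix.cons_val_three, Matrix.tail_cons, Fin.isValue, hKapp] at h
    exact h
  -- distinctness facts
  have hE4inj : Function.Injective E4 := by
    intro a a' h
    apply Fin.ext
    have h' := congrArg Fin.val h
    exact h'
  have hne : ∀ a a' : Fin 4, a ≠ a' → E4 a ≠ E4 a' := fun a a' h hh => h (hE4inj hh)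
  have hne' : ∀ i : Fin n, ¬ ((i : ℕ) < 4) → ∀ a : Fin 4, i ≠ E4 a :=
    fun i hi a h => hi (by rw [h]; exact a.isLt)
  have hQ4 : ∀ a c d a' : Fin 4, a ≠ a' → a ≠ c → a ≠ d → a' ≠ c → a' ≠ d → c ≠ d →
      0 ≤ K (E4 a) (E4 c) + K (E4 a) (E4 d) + K (E4 a') (E4 c) + K (E4 a') (E4 d) :=
    fun a c d a' h1 h2 h3 h4 h5 h6 =>
      hQ' (E4 a) (E4 a') (E4 c) (E4 d) (hne _ _ h1) (hne _ _ h2) (hne _ _ h3)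
        (hne _ _ h4) (hne _ _ h5) (hne _ _ h6)
  have hQ'' : ∀ i : Fin n, ¬ ((i : ℕ) < 4) → ∀ y z w : Fin 4, y ≠ z → y ≠ w → z ≠ w →
      0 ≤ K i (E4 z) + K i (E4 w) + K (E4 y) (E4 z) + K (E4 y) (E4 w) :=
    fun i hi y z w hyz hyw hzw =>
      hQ' i (E4 y) (E4 z) (E4 w) (hne' i hi y) (hne' i hi z) (hne' i hi w)
        (hne _ _ hyz) (hne _ _ hyw) (hne _ _ hzw)
  -- Step 3: rewrite the goal in terms of K
  rw [ge_iff_le, hRic, hRic, hRic, hRic]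
  have hchg : ∀ x : E, (∑ i, R x (b i) x (b i)) = ∑ i, R x (f i) x (f i) := by
    intro x
    let B : E →ₗ[ℝ] E →ₗ[ℝ] ℝ := LinearMap.mk₂ ℝ (fun u w => R x u x w)
      (fun u u' w => by simp) (fun c u w => by simp) (fun u w w' => by simp)
      (fun c u w => by simp)
    have hB : ∀ u w, B u w = R x u x w := fun u w => rfl
    have h := trace_indep B b f
    simp only [hB] at h
    exact h.symm
  rw [hchg, hchg, hchg, hchg]
  rw [show e 0 = f (E4 0) from (hfE4 0).symm, show e 1 = f (E4 1) from (hfE4 1).symm,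
      show e 2 = f (E4 2) from (hfE4 2).symm, show e 3 = f (E4 3) from (hfE4 3).symm]
  simp only [hKapp]
  rw [← Finset.sum_add_distrib, ← Finset.sum_add_distrib, ← Finset.sum_add_distrib]
  set T : Fin n → ℝ := fun i => K (E4 0) i + K (E4 1) i + K (E4 2) i + K (E4 3) i with hT
  show 0 ≤ ∑ i : Fin n, T i
  have hTE : ∀ i, T i = K (E4 0) i + K (E4 1) i + K (E4 2) i + K (E4 3) i := fun _ => rfl
  rw [← Finset.sum_filter_add_sum_filter_not Finset.univ (fun i : Fin n => (i : ℕ) < 4) T]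
  set A := Finset.univ.filter (fun i : Fin n => (i : ℕ) < 4) with hA
  set C := Finset.univ.filter (fun i : Fin n => ¬ (i : ℕ) < 4) with hC
  -- the part over the first four basis vectors
  have hAimg : A = Finset.image E4 Finset.univ := by
    ext i
    simp only [hA, Finset.mem_filter, Finset.mem_univ, true_and, Finset.mem_image]
    constructor
    · intro h
      exact ⟨⟨i, h⟩, Fin.ext rfl⟩
    · rintro ⟨a, -, rfl⟩
      exact a.isLt
  have hPAeq : ∑ i ∈ A, T i = ∑ a : Fin 4, T (E4 a) := by
    rw [hAimg, Finset.sum_image (fun a _ a' _ h => hE4inj h)]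
  have hPA : 0 ≤ ∑ a : Fin 4, T (E4 a) := by
    rw [Fin.sum_univ_four]
    simp only [hTE]
    have q1 := hQ4 0 2 3 1 (by decide) (by decide) (by decide) (by decide) (by decide) (by decide)
    have q2 := hQ4 0 1 3 2 (by decide) (by decide) (by decide) (by decide) (by decide) (by decide)
    have q3 := hQ4 0 1 2 3 (by decide) (by decide) (by decide) (by decide) (by decide) (by decide)
    have d0 := hKdiag (E4 0); have d1 := hKdiag (E4 1)
    have d2 := hKdiag (E4 2); have d3 := hKdiag (E4 3)
    have s01 := hKsymm (E4 0) (E4 1); have s02 := hKsymm (E4 0) (E4 2)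
    have s03 := hKsymm (E4 0) (E4 3); have s12 := hKsymm (E4 1) (E4 2)
    have s13 := hKsymm (E4 1) (E4 3); have s23 := hKsymm (E4 2) (E4 3)
    linarith
  have hPA' : 0 ≤ ∑ i ∈ A, T i := by rw [hPAeq]; exact hPA
  -- pairwise nonnegativity over the complement
  have hTpair : ∀ i ∈ C, ∀ j ∈ C, i ≠ j → 0 ≤ T i + T j := by
    intro i hi j hj hij
    have hi' : ¬ ((i : ℕ) < 4) := (Finset.mem_filter.mp hi).2
    have hj' : ¬ ((j : ℕ) < 4) := (Finset.mem_filter.mp hj).2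
    have q1 := hQ' i j (E4 0) (E4 1) hij (hne' i hi' 0) (hne' i hi' 1) (hne' j hj' 0)
      (hne' j hj' 1) (hne 0 1 (by decide))
    have q2 := hQ' i j (E4 2) (E4 3) hij (hne' i hi' 2) (hne' i hi' 3) (hne' j hj' 2)
      (hne' j hj' 3) (hne 2 3 (by decide))
    simp only [hTE]
    have s0 := hKsymm i (E4 0); have s1 := hKsymm i (E4 1)
    have s2 := hKsymm i (E4 2); have s3 := hKsymm i (E4 3)
    have t0 := hKsymm j (E4 0); have t1 := hKsymm j (E4 1)
    have t2 := hKsymm j (E4 2); have t3 := hKsymm j (E4 3)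
    linarith
  -- a single leftover index
  have hTsingle : ∀ i ∈ C, 0 ≤ 3 * T i + ∑ a : Fin 4, T (E4 a) := by
    intro i hi
    have hi' : ¬ ((i : ℕ) < 4) := (Finset.mem_filter.mp hi).2
    have q1 := hQ'' i hi' 0 1 2 (by decide) (by decide) (by decide)
    have q2 := hQ'' i hi' 0 1 3 (by decide) (by decide) (by decide)
    have q3 := hQ'' i hi' 0 2 3 (by decide) (by decide) (by decide)
    have q4 := hQ'' i hi' 1 0 2 (by decide) (by decide) (by decide)
    have q5 := hQ'' i hi' 1 0 3 (by decide) (by decide) (by decide)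
    have q6 := hQ'' i hi' 1 2 3 (by decide) (by decide) (by decide)
    have q7 := hQ'' i hi' 2 0 1 (by decide) (by decide) (by decide)
    have q8 := hQ'' i hi' 2 0 3 (by decide) (by decide) (by decide)
    have q9 := hQ'' i hi' 2 1 3 (by decide) (by decide) (by decide)
    have q10 := hQ'' i hi' 3 0 1 (by decide) (by decide) (by decide)
    have q11 := hQ'' i hi' 3 0 2 (by decide) (by decide) (by decide)
    have q12 := hQ'' i hi' 3 1 2 (by decide) (by decide) (by decide)
    rw [Fin.sum_univ_four]
    simp only [hTE]
    have s0 := hKsymm i (E4 0); have s1 := hKsymm i (E4 1)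
    have s2 := hKsymm i (E4 2); have s3 := hKsymm i (E4 3)
    have d0 := hKdiag (E4 0); have d1 := hKdiag (E4 1)
    have d2 := hKdiag (E4 2); have d3 := hKdiag (E4 3)
    have s01 := hKsymm (E4 0) (E4 1); have s02 := hKsymm (E4 0) (E4 2)
    have s03 := hKsymm (E4 0) (E4 3); have s12 := hKsymm (E4 1) (E4 2)
    have s13 := hKsymm (E4 1) (E4 3); have s23 := hKsymm (E4 2) (E4 3)
    linarith
  -- combine
  by_cases hc2 : 2 ≤ C.card
  · have h := sum_nonneg_of_pair C T hc2 hTpair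
    linarith
  · by_cases hc0 : C = ∅
    · rw [hc0, Finset.sum_empty, add_zero]
      exact hPA'
    · have hc1 : C.card = 1 := by
        have h1 : 0 < C.card := Finset.card_pos.mpr (Finset.nonempty_of_ne_empty hc0)
        omega
      obtain ⟨i₀, hi₀⟩ := Finset.card_eq_one.mp hc1
      have hm : i₀ ∈ C := hi₀ ▸ Finset.mem_singleton_self i₀
      have hs := hTsingle i₀ hm
      rw [hi₀, Finset.sum_singleton]
      linarith [hPAeq, hPA]
end

section
/- Let E be a real inner product space of dimension n ≥ 4 and let R be an algebraic curvature tensor on E with nonnegative isotropic curvature. Then the Ricci curvature of R is 4-nonnegative: the sum of the four smallest eigenvalues (counted with multiplicity) of the symmetric endomorphism of E associated to the bilinear form Ric is nonnegative. -/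
open scoped RealInnerProductSpace

lemma inj4 {α : Type*} {i0 i1 i2 i3 : α} (h01 : i0 ≠ i1) (h02 : i0 ≠ i2) (h03 : i0 ≠ i3)
    (h12 : i1 ≠ i2) (h13 : i1 ≠ i3) (h23 : i2 ≠ i3) :
    Function.Injective ![i0, i1, i2, i3] := by
  intro a b hab
  fin_cases a <;> fin_cases b <;> simp_all

lemma sum_diag_indep {E : Type*} [NormedAddCommGroup E] [InnerProductSpace ℝ E]
    {n : ℕ} (b u : OrthonormalBasis (Fin n) ℝ E) (B : E →ₗ[ℝ] E →ₗ[ℝ] ℝ) :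
    ∑ i, B (b i) (b i) = ∑ i, B (u i) (u i) := by
  have hrep : ∀ x : E, ∑ k, ⟪u k, x⟫ • u k = x := u.sum_repr'
  have step : ∀ i, B (b i) (b i) = ∑ k, ∑ l, ⟪u k, b i⟫ * ⟪u l, b i⟫ * B (u k) (u l) := by
    intro i
    conv_lhs => rw [← hrep (b i)]
    simp only [map_sum, LinearMap.sum_apply, map_smul, LinearMap.smul_apply, smul_eq_mul]
    rw [Finset.sum_comm]
    exact Finset.sum_congr rfl fun k _ => by
      rw [Finset.mul_sum]
      exact Finset.sum_congr rfl fun l _ => by ring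
  rw [Finset.sum_congr rfl fun i _ => step i, Finset.sum_comm]
  have inner_kl : ∀ k l : Fin n, ∑ i, ⟪u k, b i⟫ * ⟪u l, b i⟫ = if k = l then (1:ℝ) else 0 := by
    intro k l
    have h1 : ∀ i, ⟪u l, b i⟫ = ⟪b i, u l⟫ := fun i => real_inner_comm _ _
    calc ∑ i, ⟪u k, b i⟫ * ⟪u l, b i⟫ = ∑ i, ⟪u k, b i⟫ * ⟪b i, u l⟫ := by simp_rw [h1]
      _ = ⟪u k, u l⟫ := b.sum_inner_mul_inner (u k) (u l)
      _ = if k = l then (1:ℝ) else 0 := by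
          rcases eq_or_ne k l with h | h
          · simp [h, real_inner_self_eq_norm_sq, u.orthonormal.1 l]
          · simp [h, u.orthonormal.2 h]
  calc ∑ k, ∑ i, ∑ l, ⟪u k, b i⟫ * ⟪u l, b i⟫ * B (u k) (u l)
      = ∑ k, ∑ l, (∑ i, ⟪u k, b i⟫ * ⟪u l, b i⟫) * B (u k) (u l) := by
        refine Finset.sum_congr rfl fun k _ => ?_
        rw [Finset.sum_comm]
        exact Finset.sum_congr rfl fun l _ => by rw [Finset.sum_mul]
    _ = ∑ k, ∑ l, (if k = l then (1:ℝ) else 0) * B (u k) (u l) := by simp_rw [inner_kl]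
    _ = ∑ i, B (u i) (u i) := by simp [Finset.sum_ite_eq]

/-- If an algebraic curvature tensor `R` on a real inner product space of
dimension `n ≥ 4` has nonnegative isotropic curvature, then the symmetric endomorphism `A`
associated to its Ricci curvature is 4-nonnegative: the sum of any four of its eigenvalues
(counted with multiplicity) — in particular the four smallest — is nonnegative. -/
theorem stmt3 {E : Type*} [NormedAddCommGroup E] [InnerProductSpace ℝ E]
    [FiniteDimensional ℝ E] {n : ℕ} (hn : Module.finrank ℝ E = n) (hdim : 4 ≤ n)
    (R : E →ₗ[ℝ] E →ₗ[ℝ] E →ₗ[ℝ] E →ₗ[ℝ] ℝ)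
    (hanti₁ : ∀ x y z w, R x y z w = - R y x z w)
    (hanti₂ : ∀ x y z w, R x y z w = - R x y w z)
    (hpair : ∀ x y z w, R x y z w = R z w x y)
    (hbianchi : ∀ x y z w, R x y z w + R y z x w + R z x y w = 0)
    (hNNIC : ∀ e : Fin 4 → E, Orthonormal ℝ e →
      R (e 0) (e 2) (e 0) (e 2) + R (e 0) (e 3) (e 0) (e 3) +
        R (e 1) (e 2) (e 1) (e 2) + R (e 1) (e 3) (e 1) (e 3) -
        2 * R (e 0) (e 1) (e 2) (e 3) ≥ 0)
    (b : OrthonormalBasis (Fin n) ℝ E)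
    (A : E →ₗ[ℝ] E) (hAsym : A.IsSymmetric)
    (hA : ∀ x y, ⟪A x, y⟫ = ∑ i, R x (b i) y (b i)) :
    ∀ s : Finset (Fin n), s.card = 4 → 0 ≤ ∑ i ∈ s, hAsym.eigenvalues hn i := by
  intro s hs
  classical
  set u : OrthonormalBasis (Fin n) ℝ E := hAsym.eigenvectorBasis hn with hu
  set lam : Fin n → ℝ := hAsym.eigenvalues hn with hlam
  -- basis independence of the Ricci sum
  have hA' : ∀ x y : E, ⟪A x, y⟫ = ∑ i, R x (u i) y (u i) := by
    intro x y
    rw [hA]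
    exact sum_diag_indep b u (LinearMap.mk₂ ℝ (fun z w => R x z y w)
      (fun m₁ m₂ w => by simp) (fun c m w => by simp)
      (fun m w₁ w₂ => by simp) (fun c m w => by simp))
  have hlam_eq : ∀ i : Fin n, lam i = ∑ j, R (u i) (u j) (u i) (u j) := by
    intro i
    have h1 := hA' (u i) (u i)
    rw [hAsym.apply_eigenvectorBasis hn i] at h1
    rw [real_inner_smul_left] at h1
    have h2 : ⟪u i, u i⟫ = (1:ℝ) := by
      simp [real_inner_self_eq_norm_sq, u.orthonormal.1 i]
    rw [h2, mul_one] at h1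
    exact h1
  set K : Fin n → Fin n → ℝ := fun i j => R (u i) (u j) (u i) (u j) with hK
  have Ksymm : ∀ i j, K i j = K j i := by
    intro i j
    simp only [hK]
    rw [hanti₁ (u i) (u j) (u i) (u j), hanti₂ (u j) (u i) (u i) (u j)]
    ring
  have Kdiag : ∀ i, K i i = 0 := by
    intro i
    have h := hanti₁ (u i) (u i) (u i) (u i)
    simp only [hK]
    linarith
  -- weak NNIC on basis 4-frames
  have wk : ∀ i0 i1 i2 i3 : Fin n, i0 ≠ i1 → i0 ≠ i2 → i0 ≠ i3 → i1 ≠ i2 → i1 ≠ i3 → i2 ≠ i3 →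
      0 ≤ K i0 i2 + K i0 i3 + K i1 i2 + K i1 i3 := by
    intro i0 i1 i2 i3 h01 h02 h03 h12 h13 h23
    have hginj : Function.Injective ![i0, i1, i2, i3] := inj4 h01 h02 h03 h12 h13 h23
    have hginj' : Function.Injective ![i0, i1, i3, i2] := inj4 h01 h03 h02 h13 h12 (Ne.symm h23)
    have h1 := hNNIC (u ∘ ![i0, i1, i2, i3]) (u.orthonormal.comp _ hginj)
    have h2 := hNNIC (u ∘ ![i0, i1, i3, i2]) (u.orthonormal.comp _ hginj')
    simp only [Function.comp_apply, Matrix.cons_val_zero, Matrix.cons_val_one, Matrix.head_cons,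
      Matrix.cons_val_two, Matrix.tail_cons, Matrix.cons_val_three] at h1 h2
    have hx : R (u i0) (u i1) (u i3) (u i2) = - R (u i0) (u i1) (u i2) (u i3) :=
      hanti₂ _ _ _ _
    simp only [hK]
    linarith
  -- enumeration of s
  obtain ⟨f, hfinj, hfs⟩ : ∃ f : Fin 4 → Fin n, Function.Injective f ∧
      s = Finset.image f Finset.univ := by
    refine ⟨fun a => (s.orderIsoOfFin hs a : Fin n), ?_, ?_⟩
    · intro a b hab
      exact (s.orderIsoOfFin hs).injective (Subtype.ext hab)
    · ext j
      simp only [Finset.mem_image, Finset.mem_univ, true_and]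
      constructor
      · intro hj
        exact ⟨(s.orderIsoOfFin hs).symm ⟨j, hj⟩, by simp⟩
      · rintro ⟨a, rfl⟩
        exact (s.orderIsoOfFin hs a).2
  have hfne : ∀ a b : Fin 4, a ≠ b → f a ≠ f b := fun a b h e => h (hfinj e)
  have hfmem : ∀ a, f a ∈ s := fun a => by
    rw [hfs]; exact Finset.mem_image_of_mem _ (Finset.mem_univ a)
  have hsum : ∑ i ∈ s, lam i = ∑ a : Fin 4, ∑ j : Fin n, K (f a) j := by
    rw [hfs, Finset.sum_image (fun a _ b _ h => hfinj h)]
    refine Finset.sum_congr rfl fun a _ => ?_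
    rw [hlam_eq]
  rw [hsum, Finset.sum_comm, ← Finset.sum_add_sum_compl s (fun j => ∑ a : Fin 4, K (f a) j)]
  set T : Fin n → ℝ := fun j => ∑ a : Fin 4, K (f a) j with hT
  have hTexp : ∀ j, T j = K (f 0) j + K (f 1) j + K (f 2) j + K (f 3) j := by
    intro j
    simp only [hT, Fin.sum_univ_four]
  have hPs : ∑ j ∈ s, T j = ∑ b : Fin 4, T (f b) := by
    rw [hfs, Finset.sum_image (fun a _ b _ h => hfinj h)]
  have hP : 0 ≤ ∑ b : Fin 4, T (f b) := by
    have e1 := wk (f 0) (f 1) (f 2) (f 3) (hfne 0 1 (by decide)) (hfne 0 2 (by decide))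
      (hfne 0 3 (by decide)) (hfne 1 2 (by decide)) (hfne 1 3 (by decide)) (hfne 2 3 (by decide))
    have e2 := wk (f 0) (f 2) (f 1) (f 3) (hfne 0 2 (by decide)) (hfne 0 1 (by decide))
      (hfne 0 3 (by decide)) (hfne 2 1 (by decide)) (hfne 2 3 (by decide)) (hfne 1 3 (by decide))
    have e3 := wk (f 0) (f 3) (f 1) (f 2) (hfne 0 3 (by decide)) (hfne 0 1 (by decide))
      (hfne 0 2 (by decide)) (hfne 3 1 (by decide)) (hfne 3 2 (by decide)) (hfne 1 2 (by decide))
    simp only [hTexp, Fin.sum_univ_four]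
    have s01 := Ksymm (f 0) (f 1); have s02 := Ksymm (f 0) (f 2); have s03 := Ksymm (f 0) (f 3)
    have s12 := Ksymm (f 1) (f 2); have s13 := Ksymm (f 1) (f 3); have s23 := Ksymm (f 2) (f 3)
    have d0 := Kdiag (f 0); have d1 := Kdiag (f 1); have d2 := Kdiag (f 2); have d3 := Kdiag (f 3)
    linarith
  have hjne : ∀ j ∈ sᶜ, ∀ a : Fin 4, f a ≠ j := by
    intro j hj a h
    rw [Finset.mem_compl] at hj
    exact hj (h ▸ hfmem a)
  have hPT : ∀ j ∈ sᶜ, 0 ≤ (∑ b : Fin 4, T (f b)) + T j := by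
    intro j hj
    have n0 := hjne j hj 0; have n1 := hjne j hj 1
    have n2 := hjne j hj 2; have n3 := hjne j hj 3
    have e1 := wk (f 0) (f 1) (f 2) (f 3) (hfne 0 1 (by decide)) (hfne 0 2 (by decide))
      (hfne 0 3 (by decide)) (hfne 1 2 (by decide)) (hfne 1 3 (by decide)) (hfne 2 3 (by decide))
    have e2 := wk (f 0) (f 2) (f 1) (f 3) (hfne 0 2 (by decide)) (hfne 0 1 (by decide))
      (hfne 0 3 (by decide)) (hfne 2 1 (by decide)) (hfne 2 3 (by decide)) (hfne 1 3 (by decide))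
    have e3 := wk (f 0) (f 3) (f 1) (f 2) (hfne 0 3 (by decide)) (hfne 0 1 (by decide))
      (hfne 0 2 (by decide)) (hfne 3 1 (by decide)) (hfne 3 2 (by decide)) (hfne 1 2 (by decide))
    -- B-type inequalities: wk a b c j
    have b1 := wk (f 0) (f 1) (f 2) j (hfne 0 1 (by decide)) (hfne 0 2 (by decide)) n0
      (hfne 1 2 (by decide)) n1 n2
    have b2 := wk (f 0) (f 1) (f 3) j (hfne 0 1 (by decide)) (hfne 0 3 (by decide)) n0
      (hfne 1 3 (by decide)) n1 n3
    have b3 := wk (f 0) (f 2) (f 1) j (hfne 0 2 (by decide)) (hfne 0 1 (by decide)) n0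
      (hfne 2 1 (by decide)) n2 n1
    have b4 := wk (f 0) (f 2) (f 3) j (hfne 0 2 (by decide)) (hfne 0 3 (by decide)) n0
      (hfne 2 3 (by decide)) n2 n3
    have b5 := wk (f 0) (f 3) (f 1) j (hfne 0 3 (by decide)) (hfne 0 1 (by decide)) n0
      (hfne 3 1 (by decide)) n3 n1
    have b6 := wk (f 0) (f 3) (f 2) j (hfne 0 3 (by decide)) (hfne 0 2 (by decide)) n0
      (hfne 3 2 (by decide)) n3 n2
    have b7 := wk (f 1) (f 2) (f 0) j (hfne 1 2 (by decide)) (hfne 1 0 (by decide)) n1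
      (hfne 2 0 (by decide)) n2 n0
    have b8 := wk (f 1) (f 2) (f 3) j (hfne 1 2 (by decide)) (hfne 1 3 (by decide)) n1
      (hfne 2 3 (by decide)) n2 n3
    have b9 := wk (f 1) (f 3) (f 0) j (hfne 1 3 (by decide)) (hfne 1 0 (by decide)) n1
      (hfne 3 0 (by decide)) n3 n0
    have b10 := wk (f 1) (f 3) (f 2) j (hfne 1 3 (by decide)) (hfne 1 2 (by decide)) n1
      (hfne 3 2 (by decide)) n3 n2
    have b11 := wk (f 2) (f 3) (f 0) j (hfne 2 3 (by decide)) (hfne 2 0 (by decide)) n2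
      (hfne 3 0 (by decide)) n3 n0
    have b12 := wk (f 2) (f 3) (f 1) j (hfne 2 3 (by decide)) (hfne 2 1 (by decide)) n2
      (hfne 3 1 (by decide)) n3 n1
    simp only [hTexp, Fin.sum_univ_four]
    have s01 := Ksymm (f 0) (f 1); have s02 := Ksymm (f 0) (f 2); have s03 := Ksymm (f 0) (f 3)
    have s12 := Ksymm (f 1) (f 2); have s13 := Ksymm (f 1) (f 3); have s23 := Ksymm (f 2) (f 3)
    have s10 := Ksymm (f 1) (f 0); have s20 := Ksymm (f 2) (f 0); have s30 := Ksymm (f 3) (f 0)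
    have s21 := Ksymm (f 2) (f 1); have s31 := Ksymm (f 3) (f 1); have s32 := Ksymm (f 3) (f 2)
    have d0 := Kdiag (f 0); have d1 := Kdiag (f 1); have d2 := Kdiag (f 2); have d3 := Kdiag (f 3)
    linarith
  have hTT : ∀ j ∈ sᶜ, ∀ k ∈ sᶜ, j ≠ k → 0 ≤ T j + T k := by
    intro j hj k hk hjk
    have nj := hjne j hj
    have nk := hjne k hk
    have c1 := wk (f 0) (f 1) j k (hfne 0 1 (by decide)) (nj 0) (nk 0) (nj 1) (nk 1) hjk
    have c2 := wk (f 0) (f 2) j k (hfne 0 2 (by decide)) (nj 0) (nk 0) (nj 2) (nk 2) hjk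
    have c3 := wk (f 0) (f 3) j k (hfne 0 3 (by decide)) (nj 0) (nk 0) (nj 3) (nk 3) hjk
    have c4 := wk (f 1) (f 2) j k (hfne 1 2 (by decide)) (nj 1) (nk 1) (nj 2) (nk 2) hjk
    have c5 := wk (f 1) (f 3) j k (hfne 1 3 (by decide)) (nj 1) (nk 1) (nj 3) (nk 3) hjk
    have c6 := wk (f 2) (f 3) j k (hfne 2 3 (by decide)) (nj 2) (nk 2) (nj 3) (nk 3) hjk
    rw [hTexp j, hTexp k]
    linarith
  rw [hPs]
  by_cases hc : sᶜ.card ≤ 1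
  · rcases Nat.le_one_iff_eq_zero_or_eq_one.mp hc with h0 | h1
    · have ht : sᶜ = ∅ := Finset.card_eq_zero.mp h0
      rw [ht, Finset.sum_empty]
      linarith [hP]
    · obtain ⟨j, hj⟩ := Finset.card_eq_one.mp h1
      rw [hj, Finset.sum_singleton]
      exact hPT j (by rw [hj]; exact Finset.mem_singleton_self j)
  · push_neg at hc
    have hc2 : 2 ≤ sᶜ.card := hc
    have hTsum : 0 ≤ ∑ j ∈ sᶜ, T j := by
      have key : 0 ≤ ∑ j ∈ sᶜ, ∑ k ∈ sᶜ.erase j, (T j + T k) :=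
        Finset.sum_nonneg fun j hj => Finset.sum_nonneg fun k hk =>
          hTT j hj k (Finset.mem_of_mem_erase hk) (Ne.symm (Finset.ne_of_mem_erase hk))
      have expand : ∑ j ∈ sᶜ, ∑ k ∈ sᶜ.erase j, (T j + T k)
          = (2 * (sᶜ.card : ℝ) - 2) * ∑ j ∈ sᶜ, T j := by
        have step1 : ∀ j ∈ sᶜ, ∑ k ∈ sᶜ.erase j, (T j + T k)
            = ((sᶜ.card : ℝ) - 1) * T j + ((∑ k ∈ sᶜ, T k) - T j) := by
          intro j hj
          rw [Finset.sum_add_distrib, Finset.sum_const, Finset.card_erase_of_mem hj,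
            Finset.sum_erase_eq_sub hj, nsmul_eq_mul,
            Nat.cast_sub (le_trans one_le_two hc2)]
          push_cast
          ring
        rw [Finset.sum_congr rfl step1, Finset.sum_add_distrib, Finset.sum_sub_distrib,
          ← Finset.mul_sum, Finset.sum_const, nsmul_eq_mul]
        ring
      rw [expand] at key
      have hcr : (2:ℝ) ≤ (sᶜ.card : ℝ) := by exact_mod_cast hc2
      nlinarith
    linarith [hP]
end

section
/- Let E be a real inner product space of dimension n and let A be a symmetric (self-adjoint) endomorphism of E, and let k ≤ n. Then the sum of the k smallest eigenvalues of A (counted with multiplicity) equals the minimum over all orthonormal k-tuples (e₁,…,e_k) in E of Σᵢ₌₁ᵏ ⟨A eᵢ, eᵢ⟩. In particular, the sum of the k smallest eigenvalues of A is nonnegative if and only if Σᵢ₌₁ᵏ ⟨A eᵢ, eᵢ⟩ ≥ 0 for every orthonormal k-tuple (e₁,…,e_k) in E. -/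
open scoped RealInnerProductSpace

/-- LP fact: if `0 ≤ c j ≤ 1` and `∑ c = k`, then `∑ μ j * c j` dominates the sum of
`μ` over some `k`-element subset. -/
lemma lp_bound_aux {n k : ℕ} (hk : 1 ≤ k) (hkn : k ≤ n) (μ c : Fin n → ℝ)
    (hc0 : ∀ j, 0 ≤ c j) (hc1 : ∀ j, c j ≤ 1) (hsum : ∑ j, c j = (k : ℝ)) :
    ∃ s : Finset (Fin n), s.card = k ∧ ∑ j ∈ s, μ j ≤ ∑ j, μ j * c j := by
  have hn0 : 0 < n := lt_of_lt_of_le hk hkn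
  set σ : Equiv.Perm (Fin n) := Tuple.sort μ with hσ
  have hmono : Monotone (μ ∘ σ) := Tuple.monotone_sort μ
  set s : Finset (Fin n) := Finset.image (fun i : Fin k => σ (Fin.castLE hkn i)) Finset.univ with hs
  have hinj : Function.Injective (fun i : Fin k => σ (Fin.castLE hkn i)) :=
    fun i j h => Fin.castLE_injective hkn (σ.injective h)
  have hcard : s.card = k := by
    rw [hs, Finset.card_image_of_injective _ hinj, Finset.card_univ, Fintype.card_fin]
  have hmem : ∀ j : Fin n, j ∈ s ↔ (σ.symm j : ℕ) < k := by
    intro j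
    constructor
    · rintro hj
      rw [hs, Finset.mem_image] at hj
      obtain ⟨i, -, rfl⟩ := hj
      simp [Fin.isLt]
    · intro hj
      rw [hs, Finset.mem_image]
      exact ⟨⟨(σ.symm j : ℕ), hj⟩, Finset.mem_univ _, by simp [Fin.castLE]⟩
  refine ⟨s, hcard, ?_⟩
  set t : ℝ := μ (σ ⟨k - 1, by omega⟩) with ht
  have h1 : ∀ j ∈ s, μ j ≤ t := by
    intro j hj
    have hlt : (σ.symm j : ℕ) < k := (hmem j).1 hj
    have : μ (σ (σ.symm j)) ≤ t := hmono (by simp [Fin.le_def]; omega)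
    simpa using this
  have h2 : ∀ j ∈ sᶜ, t ≤ μ j := by
    intro j hj
    have hge : ¬ (σ.symm j : ℕ) < k := fun h => (Finset.mem_compl.mp hj) ((hmem j).2 h)
    have : t ≤ μ (σ (σ.symm j)) := hmono (by simp [Fin.le_def]; omega)
    simpa using this
  have hA : ∑ j ∈ s, (μ j + t * c j - t) ≤ ∑ j ∈ s, μ j * c j :=
    Finset.sum_le_sum fun j hj => by nlinarith [h1 j hj, hc1 j, hc0 j]
  have hB : ∑ j ∈ sᶜ, t * c j ≤ ∑ j ∈ sᶜ, μ j * c j :=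
    Finset.sum_le_sum fun j hj => by nlinarith [h2 j hj, hc0 j]
  have hsplit : ∑ j, μ j * c j = ∑ j ∈ s, μ j * c j + ∑ j ∈ sᶜ, μ j * c j :=
    (Finset.sum_add_sum_compl s _).symm
  have hcs : ∑ j ∈ s, c j + ∑ j ∈ sᶜ, c j = (k : ℝ) := by
    rw [Finset.sum_add_sum_compl]; exact hsum
  have hA' : ∑ j ∈ s, (μ j + t * c j - t)
      = ∑ j ∈ s, μ j + t * (∑ j ∈ s, c j) - t * k := by
    rw [Finset.sum_sub_distrib, Finset.sum_add_distrib, ← Finset.mul_sum,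
      Finset.sum_const, hcard, nsmul_eq_mul, mul_comm]
    ring
  have hB' : ∑ j ∈ sᶜ, t * c j = t * ∑ j ∈ sᶜ, c j := by rw [Finset.mul_sum]
  have hts : t * (∑ j ∈ s, c j) + t * (∑ j ∈ sᶜ, c j) = t * k := by
    rw [← mul_add, hcs]
  linarith [hA, hB]

/-- For a self-adjoint endomorphism `A` of an `n`-dimensional real inner
product space and `1 ≤ k ≤ n`, the sum of the `k` smallest eigenvalues of `A` (counted with
multiplicity, expressed as the minimum over all `k`-element subsets of the indexed family of
eigenvalues) is the minimum over all orthonormal `k`-tuples `(e₁,…,e_k)` of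
`∑ i, ⟪A eᵢ, eᵢ⟫`; in particular it is nonnegative iff `∑ i, ⟪A eᵢ, eᵢ⟫ ≥ 0` for every
orthonormal `k`-tuple. -/
theorem stmt4 {E : Type*} [NormedAddCommGroup E] [InnerProductSpace ℝ E]
    [FiniteDimensional ℝ E] {n : ℕ} (hn : Module.finrank ℝ E = n)
    (A : E →ₗ[ℝ] E) (hAsym : A.IsSymmetric)
    (k : ℕ) (hk : 1 ≤ k) (hkn : k ≤ n) :
    IsLeast {x : ℝ | ∃ e : Fin k → E, Orthonormal ℝ e ∧ x = ∑ i, ⟪A (e i), e i⟫}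
      (((Finset.univ : Finset (Fin n)).powersetCard k).inf'
        (Finset.powersetCard_nonempty.2 (by simpa using hkn))
        (fun s => ∑ i ∈ s, hAsym.eigenvalues hn i)) ∧
    (0 ≤ ((Finset.univ : Finset (Fin n)).powersetCard k).inf'
        (Finset.powersetCard_nonempty.2 (by simpa using hkn))
        (fun s => ∑ i ∈ s, hAsym.eigenvalues hn i) ↔
      ∀ e : Fin k → E, Orthonormal ℝ e → 0 ≤ ∑ i, ⟪A (e i), e i⟫) := by
  classical
  set μ : Fin n → ℝ := hAsym.eigenvalues hn with hμ
  set b : OrthonormalBasis (Fin n) ℝ E := hAsym.eigenvectorBasis hn with hb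
  have hApply : ∀ j, A (b j) = μ j • b j := fun j => hAsym.apply_eigenvectorBasis hn j
  have hnorm : ∀ j, ‖b j‖ = 1 := fun j => b.orthonormal.1 j
  -- quadratic form expansion
  have hquad : ∀ x : E, ⟪A x, x⟫ = ∑ j, μ j * ⟪x, b j⟫ ^ 2 := by
    intro x
    rw [real_inner_comm]
    calc ⟪x, A x⟫ = ∑ j, ⟪x, b j⟫ * ⟪b j, A x⟫ := (b.sum_inner_mul_inner x (A x)).symm
      _ = ∑ j, μ j * ⟪x, b j⟫ ^ 2 := Finset.sum_congr rfl fun j _ => by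
          rw [← hAsym (b j) x, hApply j, real_inner_smul_left, real_inner_comm (b j) x]
          ring
  have hne : ((Finset.univ : Finset (Fin n)).powersetCard k).Nonempty :=
    Finset.powersetCard_nonempty.2 (by simpa using hkn)
  set M : ℝ := (((Finset.univ : Finset (Fin n)).powersetCard k).inf'
    (Finset.powersetCard_nonempty.2 (by simpa using hkn))
    (fun s => ∑ i ∈ s, hAsym.eigenvalues hn i)) with hM
  have hLeast : IsLeast {x : ℝ | ∃ e : Fin k → E, Orthonormal ℝ e ∧ x = ∑ i, ⟪A (e i), e i⟫} M := by
    constructor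
    · -- membership: minimizing subset gives an orthonormal tuple of eigenvectors
      obtain ⟨s, hs_mem, hs_eq⟩ :=
        Finset.exists_mem_eq_inf' hne (fun s => ∑ i ∈ s, hAsym.eigenvalues hn i)
      have hscard : s.card = k := (Finset.mem_powersetCard.mp hs_mem).2
      set f : Fin k → Fin n := fun i => ((s.orderIsoOfFin hscard i : Fin n)) with hf
      have hfinj : Function.Injective f := fun i j h =>
        (s.orderIsoOfFin hscard).injective (Subtype.coe_injective h)
      refine ⟨fun i => b (f i), b.orthonormal.comp f hfinj, ?_⟩
      have hdiag : ∀ i : Fin k, ⟪A (b (f i)), b (f i)⟫ = μ (f i) := by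
        intro i
        rw [hApply, real_inner_smul_left, real_inner_self_eq_norm_sq, hnorm, one_pow, mul_one]
      calc M = ∑ i ∈ s, μ i := hs_eq
        _ = ∑ i : Fin k, μ (f i) := by
            rw [← Finset.sum_attach s μ]
            exact (Fintype.sum_equiv (s.orderIsoOfFin hscard).toEquiv
              (fun i => μ (f i)) (fun x => μ ↑x) (fun i => rfl)).symm
        _ = ∑ i, ⟪A (b (f i)), b (f i)⟫ :=
            Finset.sum_congr rfl fun i _ => (hdiag i).symm
    · -- lower bound
      rintro x ⟨e, he, rfl⟩
      set c : Fin n → ℝ := fun j => ∑ i, ⟪e i, b j⟫ ^ 2 with hc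
      have hc0 : ∀ j, 0 ≤ c j := fun j => Finset.sum_nonneg fun i _ => sq_nonneg _
      have hc1 : ∀ j, c j ≤ 1 := by
        intro j
        have hB := he.sum_inner_products_le (s := Finset.univ) (b j)
        simp only [Real.norm_eq_abs, sq_abs] at hB
        calc c j = ∑ i, ⟪e i, b j⟫ ^ 2 := rfl
          _ ≤ ‖b j‖ ^ 2 := hB
          _ = 1 := by rw [hnorm, one_pow]
      have hcsum : ∑ j, c j = (k : ℝ) := by
        rw [Finset.sum_comm]
        have : ∀ i : Fin k, ∑ j, ⟪e i, b j⟫ ^ 2 = 1 := by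
          intro i
          have hP := b.sum_inner_mul_inner (e i) (e i)
          have : ⟪e i, e i⟫ = 1 := by
            rw [real_inner_self_eq_norm_sq, he.1 i, one_pow]
          rw [this] at hP
          rw [← hP]
          exact Finset.sum_congr rfl fun j _ => by rw [sq, real_inner_comm (b j) (e i)]
        rw [Finset.sum_congr rfl fun i _ => this i]
        simp
      have hx : ∑ i, ⟪A (e i), e i⟫ = ∑ j, μ j * c j := by
        rw [Finset.sum_congr rfl fun i (_ : i ∈ Finset.univ) => hquad (e i), Finset.sum_comm]
        exact Finset.sum_congr rfl fun j _ => by rw [hc, Finset.mul_sum]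
      obtain ⟨s, hscard, hsle⟩ := lp_bound_aux hk hkn μ c hc0 hc1 hcsum
      have hsmem : s ∈ (Finset.univ : Finset (Fin n)).powersetCard k :=
        Finset.mem_powersetCard.mpr ⟨Finset.subset_univ s, hscard⟩
      calc M ≤ ∑ j ∈ s, μ j := Finset.inf'_le _ hsmem
        _ ≤ ∑ j, μ j * c j := hsle
        _ = ∑ i, ⟪A (e i), e i⟫ := hx.symm
  refine ⟨hLeast, ?_⟩
  constructor
  · intro h0 e he
    exact le_trans h0 (hLeast.2 ⟨e, he, rfl⟩)
  · intro h
    obtain ⟨e, he, hMe⟩ := hLeast.1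
    rw [hMe]
    exact h e he
end

section
/- Let E be a real inner product space of dimension n ≥ 4 and let A be a 4-nonnegative symmetric (self-adjoint) endomorphism of E, i.e. the sum of the four smallest eigenvalues of A is nonnegative. Then the tensor A∧id has nonnegative isotropic curvature: for every orthonormal 4-tuple (e₁,e₂,e₃,e₄) in E, (A∧id)(e₁,e₃,e₁,e₃) + (A∧id)(e₁,e₄,e₁,e₄) + (A∧id)(e₂,e₃,e₂,e₃) + (A∧id)(e₂,e₄,e₂,e₄) − 2(A∧id)(e₁,e₂,e₃,e₄) ≥ 0. -/
open scoped RealInnerProductSpace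

/-- The tensor `A ∧ id` associated to a bilinear form `A` on a real inner product space:
`(A∧id)(x,y,z,w) = ½(A(x,z)⟨y,w⟩ + ⟨x,z⟩A(y,w) − A(x,w)⟨y,z⟩ − ⟨x,w⟩A(y,z))`. -/
noncomputable def wedgeId {E : Type*} [NormedAddCommGroup E] [InnerProductSpace ℝ E]
    (A : E → E → ℝ) (x y z w : E) : ℝ :=
  (A x z * ⟪y, w⟫ + ⟪x, z⟫ * A y w - A x w * ⟪y, z⟫ - ⟪x, w⟫ * A y z) / 2

/-- If `A` is a 4-nonnegative self-adjoint endomorphism of a real inner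
product space of dimension `n ≥ 4` (the sum of any four eigenvalues, counted with
multiplicity, is nonnegative), then `A∧id` has nonnegative isotropic curvature. -/
theorem stmt7 {E : Type*} [NormedAddCommGroup E] [InnerProductSpace ℝ E]
    [FiniteDimensional ℝ E] {n : ℕ} (hn : Module.finrank ℝ E = n) (hdim : 4 ≤ n)
    (A : E →ₗ[ℝ] E) (hAsym : A.IsSymmetric)
    (h4nn : ∀ s : Finset (Fin n), s.card = 4 → 0 ≤ ∑ i ∈ s, hAsym.eigenvalues hn i) :
    ∀ e : Fin 4 → E, Orthonormal ℝ e →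
      wedgeId (fun x y => ⟪A x, y⟫) (e 0) (e 2) (e 0) (e 2) +
        wedgeId (fun x y => ⟪A x, y⟫) (e 0) (e 3) (e 0) (e 3) +
        wedgeId (fun x y => ⟪A x, y⟫) (e 1) (e 2) (e 1) (e 2) +
        wedgeId (fun x y => ⟪A x, y⟫) (e 1) (e 3) (e 1) (e 3) -
        2 * wedgeId (fun x y => ⟪A x, y⟫) (e 0) (e 1) (e 2) (e 3) ≥ 0 := by
  intro e he
  classical
  set lam := hAsym.eigenvalues hn with hlamdef
  set v := hAsym.eigenvectorBasis hn with hvdef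
  have hee : ∀ i j, ⟪e i, e j⟫ = if i = j then (1:ℝ) else 0 := orthonormal_iff_ite.mp he
  -- Reduce the wedge expression to the trace on the 4-frame
  have hred :
      wedgeId (fun x y => ⟪A x, y⟫) (e 0) (e 2) (e 0) (e 2) +
        wedgeId (fun x y => ⟪A x, y⟫) (e 0) (e 3) (e 0) (e 3) +
        wedgeId (fun x y => ⟪A x, y⟫) (e 1) (e 2) (e 1) (e 2) +
        wedgeId (fun x y => ⟪A x, y⟫) (e 1) (e 3) (e 1) (e 3) -
        2 * wedgeId (fun x y => ⟪A x, y⟫) (e 0) (e 1) (e 2) (e 3)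
        = ∑ i : Fin 4, ⟪A (e i), e i⟫ := by
    simp [wedgeId, hee, Fin.sum_univ_four, he.1]
    ring
  rw [hred]
  -- the weights t j
  set t : Fin n → ℝ := fun j => ∑ i : Fin 4, ⟪v j, e i⟫ ^ 2 with htdef
  have ht0 : ∀ j, 0 ≤ t j := fun j => Finset.sum_nonneg fun i _ => sq_nonneg _
  have ht1 : ∀ j, t j ≤ 1 := by
    intro j
    have hb := he.sum_inner_products_le (v j) (s := Finset.univ)
    have hnv : ‖v j‖ = 1 := (hAsym.eigenvectorBasis hn).orthonormal.1 j
    calc t j = ∑ i : Fin 4, ‖⟪e i, v j⟫‖ ^ 2 := by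
          simp [htdef, Real.norm_eq_abs, sq_abs, real_inner_comm]
      _ ≤ ‖v j‖ ^ 2 := hb
      _ = 1 := by rw [hnv]; norm_num
  have hone : ∀ i : Fin 4, ∑ j, ⟪v j, e i⟫ ^ 2 = 1 := by
    intro i
    have := v.sum_inner_mul_inner (e i) (e i)
    have h1 : ⟪e i, e i⟫ = (1:ℝ) := by simpa using hee i i
    rw [h1] at this
    rw [← this]
    refine Finset.sum_congr rfl fun j _ => ?_
    rw [real_inner_comm (e i) (v j)]; ring
  have htsum : ∑ j, t j = 4 := by
    rw [htdef]
    rw [Finset.sum_comm]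
    simp [hone, Fin.sum_univ_four]
  -- spectral expansion of the quadratic form
  have hA : ∀ x : E, ⟪A x, x⟫ = ∑ j, lam j * ⟪v j, x⟫ ^ 2 := by
    intro x
    rw [← v.sum_inner_mul_inner (A x) x]
    refine Finset.sum_congr rfl fun j _ => ?_
    have : ⟪A x, v j⟫ = lam j * ⟪v j, x⟫ := by
      rw [hAsym x (v j), hvdef, hAsym.apply_eigenvectorBasis hn j]
      simp [real_inner_smul_right, real_inner_comm, hlamdef]
    rw [this]; ring
  have hsum : ∑ i : Fin 4, ⟪A (e i), e i⟫ = ∑ j, lam j * t j := by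
    simp only [hA, htdef, Finset.mul_sum]
    rw [Finset.sum_comm]
  rw [hsum]
  -- choose a minimizing 4-subset
  have hne : ((Finset.univ : Finset (Fin n)).powersetCard 4).Nonempty := by
    apply Finset.powersetCard_nonempty.mpr
    simpa using hdim
  obtain ⟨s, hsmem, hsmin⟩ := Finset.exists_min_image _ (fun s => ∑ j ∈ s, lam j) hne
  have hscard : s.card = 4 := (Finset.mem_powersetCard.mp hsmem).2
  have hswap : ∀ j ∈ s, ∀ k, k ∉ s → lam j ≤ lam k := by
    intro j hj k hk
    have hs' : insert k (s.erase j) ∈ (Finset.univ : Finset (Fin n)).powersetCard 4 := by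
      rw [Finset.mem_powersetCard]
      refine ⟨Finset.subset_univ _, ?_⟩
      rw [Finset.card_insert_of_notMem (fun h => hk (Finset.mem_of_mem_erase h)),
        Finset.card_erase_of_mem hj, hscard]
    have := hsmin _ hs'
    rw [Finset.sum_insert (fun h => hk (Finset.mem_of_mem_erase h)),
      Finset.sum_erase_eq_sub hj] at this
    linarith
  -- pick the max eigenvalue on s
  have hsne : s.Nonempty := Finset.card_pos.mp (by rw [hscard]; norm_num)
  obtain ⟨j0, hj0, hj0max⟩ := Finset.exists_max_image s lam hsne
  set m := lam j0 with hmdef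
  have hm_lb : ∀ k, k ∉ s → m ≤ lam k := fun k hk => hswap j0 hj0 k hk
  have hm_ub : ∀ j ∈ s, lam j ≤ m := hj0max
  -- main estimate
  have hsplit : ∑ j, lam j * t j = ∑ j ∈ s, lam j * t j + ∑ j ∈ sᶜ, lam j * t j :=
    (Finset.sum_add_sum_compl s _).symm
  have htsplit : ∑ j ∈ s, t j + ∑ j ∈ sᶜ, t j = 4 := by
    rw [Finset.sum_add_sum_compl]; exact htsum
  have hcompl : ∑ j ∈ sᶜ, m * t j ≤ ∑ j ∈ sᶜ, lam j * t j := by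
    refine Finset.sum_le_sum fun j hj => ?_
    exact mul_le_mul_of_nonneg_right (hm_lb j (Finset.mem_compl.mp hj)) (ht0 j)
  have hmsum : ∑ j ∈ sᶜ, m * t j = ∑ j ∈ s, m * (1 - t j) := by
    have h1 : ∑ j ∈ sᶜ, t j = 4 - ∑ j ∈ s, t j := by linarith
    have h2 : ∑ j ∈ s, m * (1 - t j) = 4 * m - m * ∑ j ∈ s, t j := by
      rw [Finset.sum_congr rfl (fun j _ => mul_one_sub m (t j)), Finset.sum_sub_distrib,
        Finset.sum_const, hscard, ← Finset.mul_sum]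
      ring
    rw [← Finset.mul_sum, h1, h2]; ring
  have hkey : ∑ j ∈ s, lam j ≤ ∑ j ∈ s, (lam j * t j + m * (1 - t j)) := by
    refine Finset.sum_le_sum fun j hj => ?_
    have h1 : lam j ≤ m := hm_ub j hj
    have h2 : t j ≤ 1 := ht1 j
    nlinarith
  have h0 : (0:ℝ) ≤ ∑ j ∈ s, lam j := h4nn s hscard
  rw [ge_iff_le, hsplit]
  have : ∑ j ∈ s, (lam j * t j + m * (1 - t j)) =
      ∑ j ∈ s, lam j * t j + ∑ j ∈ s, m * (1 - t j) := Finset.sum_add_distrib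
  linarith [hcompl, hkey, hmsum]
end

section
/- Let E be a finite-dimensional real inner product space, let A be a symmetric (self-adjoint) endomorphism of E, let (v₁,…,vₙ) be an orthonormal basis of eigenvectors of A with eigenvalues λ₁,…,λₙ. Then for all indices i < j and k < l: (A∧id)(vᵢ,vⱼ,v_k,v_l) = (λᵢ + λⱼ)/2 if (i,j) = (k,l), and (A∧id)(vᵢ,vⱼ,v_k,v_l) = 0 if (i,j) ≠ (k,l). (That is, the eigenvalues of the curvature operator A∧id on 2-vectors are the numbers (λᵢ + λⱼ)/2 for i < j.) -/
open scoped RealInnerProductSpace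

/-- If `A` is a self-adjoint endomorphism with an orthonormal basis of
eigenvectors `(vᵢ)` and eigenvalues `(λᵢ)`, then for `i < j` and `k < l`:
`(A∧id)(vᵢ,vⱼ,v_k,v_l) = (λᵢ+λⱼ)/2` if `(i,j) = (k,l)`, and `= 0` otherwise. -/
theorem stmt8 {E : Type*} [NormedAddCommGroup E] [InnerProductSpace ℝ E]
    [FiniteDimensional ℝ E] {n : ℕ} (hn : Module.finrank ℝ E = n)
    (A : E →ₗ[ℝ] E) (hAsym : A.IsSymmetric)
    (v : OrthonormalBasis (Fin n) ℝ E) (lam : Fin n → ℝ)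
    (heig : ∀ i, A (v i) = lam i • v i) :
    ∀ i j k l : Fin n, i < j → k < l →
      (((i, j) = (k, l)) →
        wedgeId (fun x y => ⟪A x, y⟫) (v i) (v j) (v k) (v l) = (lam i + lam j) / 2) ∧
      (((i, j) ≠ (k, l)) →
        wedgeId (fun x y => ⟪A x, y⟫) (v i) (v j) (v k) (v l) = 0) := by
  have horth : ∀ a b : Fin n, ⟪v a, v b⟫ = if a = b then (1:ℝ) else 0 := fun a b =>
    orthonormal_iff_ite.mp v.orthonormal a b
  intro i j k l hij hkl
  constructor
  · rintro h
    rw [Prod.mk.injEq] at h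
    obtain ⟨rfl, rfl⟩ := h
    simp [wedgeId, heig, inner_smul_left, horth, hij.ne, hij.ne']
  · intro h
    rw [Ne, Prod.mk.injEq, not_and_or] at h
    simp only [wedgeId, heig, inner_smul_left, horth, RCLike.star_def, conj_trivial]
    by_cases hik : i = k <;> by_cases hjl : j = l <;>
      by_cases hil : i = l <;> by_cases hjk : j = k <;>
      simp_all <;> omega
end

section
/- Let E be a finite-dimensional real inner product space and let A be a positive semidefinite symmetric (self-adjoint) endomorphism of E. Then A∧id is nonnegative as a curvature operator: for every m and every finite families of vectors x₁,…,x_m and y₁,…,y_m in E, Σ_{a=1}^m Σ_{b=1}^m (A∧id)(x_a, y_a, x_b, y_b) ≥ 0. -/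
open scoped RealInnerProductSpace

lemma rankOne_nonneg {E : Type*} [NormedAddCommGroup E] [InnerProductSpace ℝ E]
    (v : E) (m : ℕ) (x y : Fin m → E) :
    0 ≤ ∑ a, ∑ b, wedgeId (fun u w => ⟪u, v⟫ * ⟪w, v⟫) (x a) (y a) (x b) (y b) := by
  set p : E := ∑ a, ⟪x a, v⟫ • y a with hp
  set q : E := ∑ a, ⟪y a, v⟫ • x a with hq
  have key : ∑ a, ∑ b, wedgeId (fun u w => ⟪u, v⟫ * ⟪w, v⟫) (x a) (y a) (x b) (y b)
      = ⟪p - q, p - q⟫ / 2 := by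
    rw [inner_sub_sub_self, hp, hq]
    simp only [sum_inner, inner_sum, real_inner_smul_left, real_inner_smul_right,
      ← Finset.sum_sub_distrib, ← Finset.sum_add_distrib, Finset.sum_div]
    refine Finset.sum_congr rfl fun a _ => ?_
    refine Finset.sum_congr rfl fun c _ => ?_
    simp only [wedgeId]
    rw [real_inner_comm (y c) (y a), real_inner_comm (x c) (x a),
      real_inner_comm (y c) (x a), real_inner_comm (x c) (y a)]
    ring
  rw [key]
  exact div_nonneg real_inner_self_nonneg (by norm_num)

/-- If `A` is a positive semidefinite self-adjoint endomorphism of a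
finite-dimensional real inner product space, then `A∧id` is nonnegative as a curvature
operator: `∑ₐ ∑_b (A∧id)(xₐ, yₐ, x_b, y_b) ≥ 0` for all finite families `(xₐ)`, `(yₐ)`. -/
theorem stmt9 {E : Type*} [NormedAddCommGroup E] [InnerProductSpace ℝ E]
    [FiniteDimensional ℝ E]
    (A : E →ₗ[ℝ] E) (hAsym : A.IsSymmetric)
    (hpsd : ∀ x : E, 0 ≤ ⟪A x, x⟫) :
    ∀ (m : ℕ) (x y : Fin m → E),
      0 ≤ ∑ a, ∑ b, wedgeId (fun u w => ⟪A u, w⟫) (x a) (y a) (x b) (y b) := by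
  intro m x y
  set n := Module.finrank ℝ E with hn
  set b := hAsym.eigenvectorBasis hn.symm with hb
  set μ := hAsym.eigenvalues hn.symm with hμ
  have hμ0 : ∀ i, 0 ≤ μ i := by
    intro i
    have h1 := hpsd (b i)
    rw [hAsym.apply_eigenvectorBasis hn.symm i, real_inner_smul_left,
      real_inner_self_eq_norm_sq, b.orthonormal.1 i] at h1
    simpa using h1
  have expand : ∀ u w : E, ⟪A u, w⟫ = ∑ i, μ i * (⟪u, b i⟫ * ⟪w, b i⟫) := by
    intro u w
    conv_lhs => rw [← b.sum_repr u]
    rw [map_sum, sum_inner]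
    refine Finset.sum_congr rfl fun i _ => ?_
    rw [map_smul, hAsym.apply_eigenvectorBasis hn.symm i, b.repr_apply_apply]
    rw [real_inner_smul_left, real_inner_smul_left, real_inner_comm (b i) u,
      real_inner_comm w (b i)]
    rw [hμ]
    simp only [RCLike.ofReal_real_eq_id, id]
    ring
  have lin : ∀ a c : Fin m,
      wedgeId (fun u w => ⟪A u, w⟫) (x a) (y a) (x c) (y c)
        = ∑ i, μ i * wedgeId (fun u w => ⟪u, b i⟫ * ⟪w, b i⟫) (x a) (y a) (x c) (y c) := by
    intro a c
    simp only [wedgeId, expand, Finset.sum_mul, Finset.mul_sum,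
      ← Finset.sum_sub_distrib, ← Finset.sum_add_distrib, Finset.sum_div]
    refine Finset.sum_congr rfl fun i _ => ?_
    ring
  simp only [lin]
  have h1 : ∀ a : Fin m,
      ∑ c, ∑ i, μ i * wedgeId (fun u w => ⟪u, b i⟫ * ⟪w, b i⟫) (x a) (y a) (x c) (y c)
        = ∑ i, ∑ c, μ i * wedgeId (fun u w => ⟪u, b i⟫ * ⟪w, b i⟫) (x a) (y a) (x c) (y c) :=
    fun a => by rw [Finset.sum_comm]
  simp only [h1]
  rw [Finset.sum_comm]
  refine Finset.sum_nonneg fun i _ => ?_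
  simp only [← Finset.mul_sum]
  exact mul_nonneg (hμ0 i) (rankOne_nonneg (b i) m x y)
end
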